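/- Let a, b ∈ ℝ with a ≠ b. Then the 2×2 real matrix B with first row (ab/(b−a), −a²/(b−a)) and second row (b²/(b−a), −ab/(b−a)) satisfies the polynomial identity (I₂ − B·z)·(1+az, 1+bz)' = (1, 1)' in (ℝ[z])². In particular, the zeroless polynomial vector (1+az, 1+bz)' admits a degree-one polynomial left inverse: a finite-degree matrix polynomial maps it to its value at z = 0. -/

import Mathlib

open Matrix

/-- **Explicit finite autoregressive representation (Appendix C.2, equation (C.3)).**
For `a ≠ b`, the matrix `B` with rows `(ab/(b−a), −a²/(b−a))` and `(b²/(b−a), −ab/(b−a))`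
satisfies `(I₂ − Bz)·(1+az, 1+bz)' = (1, 1)'`; in particular the zeroless polynomial
vector `(1+az, 1+bz)'` admits a degree-one polynomial left inverse mapping it to its
value at `z = 0`. -/
theorem stmt_14 (a b : ℝ) (hab : a ≠ b) :
    ((1 : Matrix (Fin 2) (Fin 2) (Polynomial ℝ)) -
        (Polynomial.X : Polynomial ℝ) • (!![a * b / (b - a), -a ^ 2 / (b - a);
                          b ^ 2 / (b - a), -(a * b) / (b - a)].map Polynomial.C)).mulVec
      ![1 + Polynomial.C a * Polynomial.X, 1 + Polynomial.C b * Polynomial.X]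
      = ![1, 1] ∧
    ∃ W : Matrix (Fin 2) (Fin 2) (Polynomial ℝ),
      (∀ i j, (W i j).degree ≤ 1) ∧
      W.mulVec ![1 + Polynomial.C a * Polynomial.X, 1 + Polynomial.C b * Polynomial.X]
        = ![Polynomial.C ((1 + Polynomial.C a * Polynomial.X).eval 0),
            Polynomial.C ((1 + Polynomial.C b * Polynomial.X).eval 0)] := by
  have hd : b - a ≠ 0 := sub_ne_zero.mpr (Ne.symm hab)
  have hw : Polynomial.C (b - a) * Polynomial.C ((b - a)⁻¹) = (1 : Polynomial ℝ) := by
    rw [← Polynomial.C_mul, mul_inv_cancel₀ hd, Polynomial.C_1]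
  have hmain : ((1 : Matrix (Fin 2) (Fin 2) (Polynomial ℝ)) -
        (Polynomial.X : Polynomial ℝ) • (!![a * b / (b - a), -a ^ 2 / (b - a);
                          b ^ 2 / (b - a), -(a * b) / (b - a)].map Polynomial.C)).mulVec
      ![1 + Polynomial.C a * Polynomial.X, 1 + Polynomial.C b * Polynomial.X]
      = ![1, 1] := by
    funext i
    fin_cases i <;>
      simp [mulVec, dotProduct, Fin.sum_univ_two, Matrix.one_apply, div_eq_mul_inv,
        _root_.map_mul, map_sub, map_pow, map_neg] <;>
      simp only [map_sub] at hw
    · linear_combination (-(Polynomial.C a) * Polynomial.X) * hw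
    · linear_combination (-(Polynomial.C b) * Polynomial.X) * hw
  refine ⟨hmain, ⟨(1 : Matrix (Fin 2) (Fin 2) (Polynomial ℝ)) -
        (Polynomial.X : Polynomial ℝ) • (!![a * b / (b - a), -a ^ 2 / (b - a);
                          b ^ 2 / (b - a), -(a * b) / (b - a)].map Polynomial.C),
      fun i j => ?_, by simpa using hmain⟩⟩
  fin_cases i <;> fin_cases j <;>
    simp [Matrix.one_apply] <;>
    first
      | exact le_trans (Polynomial.degree_sub_le _ _) (by
          simp only [Polynomial.degree_one, max_le_iff]
          exact ⟨by norm_num, le_trans (Polynomial.degree_mul_le _ _)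
            (by simpa using add_le_add_left Polynomial.degree_C_le 1)⟩)
      | exact le_trans (add_le_add_left Polynomial.degree_C_le 1) (by norm_num)
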